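/- Assume (H0), fix h > 0, and let G_k = G_{k,h} be the Grünwald coefficients (with G_k = 0 for k < 0) and φ_h(β) = Σ_{k=0}^∞ G_k e^{h(1−k)β} as before. With y = y(β) the vector defined by y_n = e^{h(n−1)φ_h^{−1}(β)} for n ≤ 0 and y_n = (1/β) Σ_{k=n}^∞ G_{k+1} e^{h(n−1−k)φ_h^{−1}(β)} for n > 0, one has componentwise as β ↓ 0: (β/G_0)·y_n → z_n, where z_n = 0 for n ≤ 0 and z_n = −(1/G_0) Σ_{k=0}^n G_k for n > 0. In particular, 0 ≤ z_n ≤ 1 for n > 0. -/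

import Mathlib

open MeasureTheory Set Filter Topology

noncomputable section

/-- Assumption (H0): `μ` is a nonnegative Borel measure on `(0,∞)` with
`∫ (y² ∧ y) μ(dy) < ∞` and `∫_{(0,1)} y μ(dy) = ∞`. -/
def H0 (μ : Measure ℝ) : Prop :=
  μ (Iic 0) = 0 ∧
  (∫⁻ y, ENNReal.ofReal (min (y ^ 2) y) ∂μ) < ⊤ ∧
  (∫⁻ y in Ioo (0:ℝ) 1, ENNReal.ofReal y ∂μ) = ⊤

/-- The Laplace exponent `ψ(ξ) = ∫ (e^{−ξy} − 1 + ξy) μ(dy)`. -/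
noncomputable def psiH (μ : Measure ℝ) (ξ : ℝ) : ℝ :=
  ∫ y, (Real.exp (-(ξ * y)) - 1 + ξ * y) ∂μ

/-- `φ_h(β) = e^{hβ} ψ((1−e^{−hβ})/h) = Σ_{k≥0} G_k e^{h(1−k)β}`. -/
noncomputable def phiExp (G : ℤ → ℝ) (h β : ℝ) : ℝ :=
  ∑' k : ℕ, G (k : ℤ) * Real.exp (h * (1 - (k : ℝ)) * β)

/-- The candidate resolvent vector `y = y(β)` (with `θ = φ_h^{−1}(β)`):
`y_n = e^{h(n−1)θ}` for `n ≤ 0` and `y_n = (1/β) Σ_{k≥n} G_{k+1} e^{h(n−1−k)θ}` for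
`n > 0`. -/
noncomputable def resVec (G : ℤ → ℝ) (h θ β : ℝ) : ℤ → ℝ :=
  fun n => if n ≤ 0 then Real.exp (h * ((n : ℝ) - 1) * θ)
    else (1 / β) * ∑' m : ℕ, G (n + (m : ℤ) + 1) * Real.exp (h * (-1 - (m : ℝ)) * θ)


section AuxReal

lemma aux_e0 (x : ℝ) : 0 ≤ Real.exp (-x) - 1 + x := by
  linarith [Real.add_one_le_exp (-x)]

lemma aux_e0_le {x : ℝ} (hx : 0 ≤ x) : Real.exp (-x) - 1 + x ≤ min (x^2) x := by
  have h1 : Real.exp (-x) - 1 + x ≤ x := by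
    nlinarith [Real.exp_le_one_iff.mpr (neg_nonpos.mpr hx)]
  rcases le_total x 1 with hx1 | hx1
  · refine le_min ?_ h1
    have hb := Real.exp_bound (x := -x) (by rwa [abs_neg, abs_of_nonneg hx]) (n := 2) (by norm_num)
    rw [show ∑ m ∈ Finset.range 2, (-x) ^ m / (m.factorial : ℝ) = 1 - x by
        simp [Finset.sum_range_succ]; ring] at hb
    have h2 : |Real.exp (-x) - (1 - x)| ≤ x ^ 2 * (3/4) := by
      refine hb.trans_eq ?_
      rw [abs_neg, abs_of_nonneg hx]
      norm_num [Nat.factorial]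
    have := abs_le.mp h2
    nlinarith
  · have : x ≤ x^2 := by nlinarith
    refine le_min (by linarith) h1

lemma aux_e1_nonneg {x : ℝ} (hx : 0 ≤ x) : 0 ≤ x - x * Real.exp (-x) := by
  nlinarith [Real.exp_le_one_iff.mpr (neg_nonpos.mpr hx)]

lemma aux_e1_le {x : ℝ} (hx : 0 ≤ x) : x - x * Real.exp (-x) ≤ min (x^2) x := by
  have h1 : Real.exp (-x) ≤ 1 := Real.exp_le_one_iff.mpr (neg_nonpos.mpr hx)
  have h2 : 1 - x ≤ Real.exp (-x) := by linarith [Real.add_one_le_exp (-x)]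
  exact le_min (by nlinarith) (by nlinarith [Real.exp_pos (-x)])

lemma aux_pow_le_exp {x : ℝ} (hx : 0 ≤ x) (j : ℕ) : x ^ j / (j.factorial : ℝ) ≤ Real.exp x := by
  have h := Real.sum_le_exp_of_nonneg hx (j+1)
  have h2 : x ^ j / (j.factorial : ℝ) ≤ ∑ i ∈ Finset.range (j+1), x ^ i / i.factorial := by
    refine Finset.single_le_sum (f := fun i => x ^ i / (i.factorial : ℝ)) ?_
      (Finset.self_mem_range_succ j)
    intro i _
    positivity
  linarith

lemma aux_ej_le {x : ℝ} (hx : 0 ≤ x) {j : ℕ} (hj : 2 ≤ j) :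
    Real.exp (-x) * x ^ j / (j.factorial : ℝ) ≤ min (x^2) x := by
  have hfac1 : (1:ℝ) ≤ (j.factorial : ℝ) := by
    exact_mod_cast Nat.one_le_iff_ne_zero.mpr j.factorial_ne_zero
  have hexp1 : Real.exp (-x) ≤ 1 := Real.exp_le_one_iff.mpr (neg_nonpos.mpr hx)
  have hexp0 : 0 < Real.exp (-x) := Real.exp_pos _
  have hle_x : Real.exp (-x) * x ^ j / (j.factorial : ℝ) ≤ x := by
    rcases le_total x 1 with hx1 | hx1
    · have hpj : x ^ j ≤ x := pow_le_of_le_one hx hx1 (by omega)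
      rw [div_le_iff₀ (by positivity)]
      nlinarith [pow_nonneg hx j]
    · obtain ⟨k, rfl⟩ : ∃ k, j = k + 1 := ⟨j - 1, by omega⟩
      have hkey : x ^ k ≤ (k.factorial : ℝ) * Real.exp x := by
        have := aux_pow_le_exp hx k
        have hk0 : (0:ℝ) < k.factorial := by positivity
        rw [div_le_iff₀ hk0] at this
        linarith [this]
      have hfk : (k.factorial : ℝ) ≤ ((k+1).factorial : ℝ) := by
        exact_mod_cast Nat.factorial_le (Nat.le_succ k)
      have hEinv : Real.exp (-x) * Real.exp x = 1 := by
        rw [← Real.exp_add]; simp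
      rw [div_le_iff₀ (by positivity), pow_succ]
      have hfk0 : (0:ℝ) < ((k+1).factorial : ℝ) := by positivity
      have h5 : Real.exp (-x) * x ^ k ≤ (k.factorial : ℝ) := by
        have := mul_le_mul_of_nonneg_left hkey (le_of_lt hexp0)
        nlinarith [this]
      nlinarith [pow_nonneg hx k, h5]
  refine le_min ?_ hle_x
  rcases le_total x 1 with hx1 | hx1
  · have hpj : x ^ j ≤ x ^ 2 := pow_le_pow_of_le_one hx hx1 hj
    rw [div_le_iff₀ (by positivity)]
    nlinarith [pow_nonneg hx j, sq_nonneg x]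
  · exact hle_x.trans (by nlinarith)

lemma aux_mono {x s t : ℝ} (hx : 0 ≤ x) (hs : 0 ≤ s) (hst : s ≤ t) :
    Real.exp (-(s*x)) - 1 + s*x ≤ Real.exp (-(t*x)) - 1 + t*x := by
  have h1 : Real.exp (-(s*x)) - Real.exp (-(t*x)) ≤ t*x - s*x := by
    have heq : Real.exp (-(s*x)) - Real.exp (-(t*x))
        = Real.exp (-(s*x)) * (1 - Real.exp (-(t*x - s*x))) := by
      rw [mul_sub, mul_one, ← Real.exp_add]; ring_nf
    rw [heq]
    have h2 : Real.exp (-(s*x)) ≤ 1 :=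
      Real.exp_le_one_iff.mpr (neg_nonpos.mpr (by positivity))
    have h3 : 1 - Real.exp (-(t*x - s*x)) ≤ t*x - s*x := by
      linarith [Real.add_one_le_exp (-(t*x - s*x))]
    have h4 : 0 ≤ 1 - Real.exp (-(t*x - s*x)) := by
      have : Real.exp (-(t*x - s*x)) ≤ 1 := Real.exp_le_one_iff.mpr (by nlinarith)
      linarith
    nlinarith
  linarith

-- 2(e^{-x}-1+x) + (x e^{-x} - x) ≥ 0
lemma aux_2a0a1 {x : ℝ} (hx : 0 ≤ x) :
    0 ≤ 2 * (Real.exp (-x) - 1 + x) + (x * Real.exp (-x) - x) := by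
  have key : ∀ y : ℝ, 0 ≤ y → 0 ≤ 1 - (1 + y) * Real.exp (-y) := by
    intro y hy
    have h := Real.add_one_le_exp y
    have hE := Real.exp_pos y
    have hinv : Real.exp (-y) = (Real.exp y)⁻¹ := Real.exp_neg y
    have h2 : (1 + y) * (Real.exp y)⁻¹ ≤ 1 := by
      rw [← div_eq_mul_inv, div_le_one hE]; linarith
    rw [hinv]; linarith
  set g : ℝ → ℝ := fun y => 2 * Real.exp (-y) + y * Real.exp (-y) + y - 2 with hg
  have hderiv : ∀ y : ℝ, HasDerivAt g (1 - (1 + y) * Real.exp (-y)) y := by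
    intro y
    have h1 : HasDerivAt (fun y : ℝ => -y) (-1) y := (hasDerivAt_id y).neg
    have h2 : HasDerivAt (fun y : ℝ => Real.exp (-y)) (Real.exp (-y) * (-1)) y := h1.exp
    have h3 : HasDerivAt (fun y : ℝ => y * Real.exp (-y))
        (1 * Real.exp (-y) + y * (Real.exp (-y) * (-1))) y := (hasDerivAt_id y).mul h2
    have h4 := ((h2.const_mul 2).add h3).add ((hasDerivAt_id y).sub_const 2)
    have h5 : 2 * (Real.exp (-y) * -1) + (1 * Real.exp (-y) + y * (Real.exp (-y) * -1)) + 1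
        = 1 - (1 + y) * Real.exp (-y) := by ring
    rw [h5] at h4
    have h6 : g = fun x : ℝ => 2 * Real.exp (-x) + x * Real.exp (-x) + (id x - 2) := by
      funext z
      simp only [hg, id]
      ring
    rw [h6]
    exact h4
  have hmono : MonotoneOn g (Set.Ici (0:ℝ)) := by
    apply monotoneOn_of_deriv_nonneg (convex_Ici 0)
    · exact Continuous.continuousOn (by fun_prop)
    · intro y _
      exact (hderiv y).differentiableAt.differentiableWithinAt
    · intro y hy
      rw [(hderiv y).deriv]
      refine key y (le_of_lt ?_)
      simpa [interior_Ici] using hy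
  have h0 : g 0 = 0 := by simp [hg]
  have hgx := hmono Set.self_mem_Ici hx hx
  rw [h0] at hgx
  simp only [hg] at hgx
  linarith

noncomputable def acoef (h : ℝ) (j : ℕ) (y : ℝ) : ℝ :=
  Real.exp (-(y/h)) * (y/h)^j / (j.factorial : ℝ) +
    (if j = 0 then y/h - 1 else if j = 1 then -(y/h) else 0)

lemma hasSum_acoef (h : ℝ) (y ξ : ℝ) :
    HasSum (fun j : ℕ => acoef h j y * ξ^j)
      (Real.exp (-((1-ξ)/h * y)) - 1 + (1-ξ)/h * y) := by
  set x := y / h with hx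
  have he : HasSum (fun j : ℕ => (ξ*x)^j / (j.factorial : ℝ)) (Real.exp (ξ*x)) := by
    rw [Real.exp_eq_exp_ℝ]
    exact NormedSpace.expSeries_div_hasSum_exp (ξ*x)
  have h1 : HasSum (fun j : ℕ => (Real.exp (-x) * x^j / (j.factorial : ℝ)) * ξ^j)
      (Real.exp (-x) * Real.exp (ξ*x)) :=
    (he.mul_left (Real.exp (-x))).congr_fun fun j => by rw [mul_pow]; ring
  have g0 := hasSum_ite_eq (0:ℕ) ((x-1) * ξ^(0:ℕ))
  have g1 := hasSum_ite_eq (1:ℕ) ((-x) * ξ^(1:ℕ))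
  have h2 : HasSum (fun j : ℕ => (if j = 0 then x - 1 else if j = 1 then -x else 0) * ξ^j)
      ((x-1) * ξ^(0:ℕ) + (-x) * ξ^(1:ℕ)) := by
    refine (g0.add g1).congr_fun fun j => ?_
    rcases j with _ | _ | j <;> simp
  have h3 := h1.add h2
  have hfun : ∀ j : ℕ, acoef h j y * ξ^j
      = (Real.exp (-x) * x^j / (j.factorial : ℝ)) * ξ^j
        + (if j = 0 then x - 1 else if j = 1 then -x else 0) * ξ^j := by
    intro j
    rw [acoef, ← hx, add_mul]
  have hval : Real.exp (-x) * Real.exp (ξ*x) + ((x-1) * ξ^(0:ℕ) + (-x) * ξ^(1:ℕ))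
      = Real.exp (-((1-ξ)/h * y)) - 1 + (1-ξ)/h * y := by
    rw [← Real.exp_add]
    have hxy : (1-ξ)/h * y = (1-ξ) * x := by rw [hx]; ring
    rw [hxy]
    have : -x + ξ * x = -((1-ξ) * x) := by ring
    rw [this]
    ring
  rw [← hval]
  exact h3.congr_fun hfun

lemma coeff_base (d : ℕ → ℝ)
    (hd : ∀ ξ : ℝ, 0 < ξ → ξ < 1 → HasSum (fun j => d j * ξ^j) 0) : d 0 = 0 := by
  obtain ⟨M, hM0, hM⟩ : ∃ M : ℝ, 0 < M ∧ ∀ j, |d j| ≤ M * 2^j := by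
    have hs : Summable (fun j => d j * (1/2:ℝ)^j) :=
      (hd (1/2) (by norm_num) (by norm_num)).summable
    have ht := hs.tendsto_atTop_zero
    obtain ⟨N, hN⟩ := (Metric.tendsto_atTop.mp ht) 1 one_pos
    refine ⟨1 + ∑ i ∈ Finset.range N, |d i * (1/2:ℝ)^i|, by positivity, fun j => ?_⟩
    have key : |d j * (1/2:ℝ)^j| ≤ 1 + ∑ i ∈ Finset.range N, |d i * (1/2:ℝ)^i| := by
      rcases le_or_gt N j with hj | hj
      · have := hN j hj
        rw [Real.dist_eq, sub_zero] at this
        have hsum : (0:ℝ) ≤ ∑ i ∈ Finset.range N, |d i * (1/2:ℝ)^i| :=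
          Finset.sum_nonneg fun i _ => abs_nonneg _
        linarith
      · have := Finset.single_le_sum (f := fun i => |d i * (1/2:ℝ)^i|)
          (fun i _ => abs_nonneg _) (Finset.mem_range.mpr hj)
        linarith
    rw [abs_mul, abs_pow, abs_of_nonneg (by norm_num : (0:ℝ) ≤ 1/2)] at key
    have h2 : ((1:ℝ)/2)^j * 2^j = 1 := by
      rw [← mul_pow]; norm_num
    calc |d j| = |d j| * ((1/2:ℝ)^j * 2^j) := by rw [h2, mul_one]
      _ = (|d j| * (1/2:ℝ)^j) * 2^j := by ring
      _ ≤ (1 + ∑ i ∈ Finset.range N, |d i * (1/2:ℝ)^i|) * 2^j := by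
          apply mul_le_mul_of_nonneg_right key (by positivity)
  have hsmall : ∀ ξ : ℝ, 0 < ξ → ξ ≤ 1/4 → |d 0| ≤ 4*M*ξ := by
    intro ξ hξ0 hξ4
    have h := hd ξ hξ0 (by linarith)
    have hsum := h.summable
    have hsplit := Summable.sum_add_tsum_nat_add 1 hsum
    rw [h.tsum_eq] at hsplit
    simp only [Finset.range_one, Finset.sum_singleton, pow_zero, mul_one] at hsplit
    have hd0 : d 0 = -∑' i, d (i+1) * ξ^(i+1) := by linarith
    have hb : ∀ i : ℕ, |d (i+1) * ξ^(i+1)| ≤ (M*(2*ξ)) * (2*ξ)^i := by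
      intro i
      rw [abs_mul, abs_pow, abs_of_nonneg hξ0.le]
      calc |d (i+1)| * ξ^(i+1) ≤ (M * 2^(i+1)) * ξ^(i+1) := by
            apply mul_le_mul_of_nonneg_right (hM _) (by positivity)
        _ = (M*(2*ξ)) * (2*ξ)^i := by rw [mul_pow]; ring
    have h2ξ : (0:ℝ) ≤ 2*ξ := by linarith
    have h2ξ1 : 2*ξ < 1 := by linarith
    have hg : Summable (fun i : ℕ => (M*(2*ξ)) * (2*ξ)^i) :=
      (summable_geometric_of_lt_one h2ξ h2ξ1).mul_left _
    have habs : Summable (fun i : ℕ => |d (i+1) * ξ^(i+1)|) :=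
      Summable.of_nonneg_of_le (fun i => abs_nonneg _) hb hg
    have h3 : |∑' i, d (i+1) * ξ^(i+1)| ≤ ∑' i, (M*(2*ξ)) * (2*ξ)^i := by
      calc |∑' i, d (i+1) * ξ^(i+1)| ≤ ∑' i, |d (i+1) * ξ^(i+1)| := by
            have habs' : Summable (fun i : ℕ => ‖d (i+1) * ξ^(i+1)‖) := by
              simpa only [Real.norm_eq_abs] using habs
            have hnorm := norm_tsum_le_tsum_norm habs'
            simpa only [Real.norm_eq_abs] using hnorm
        _ ≤ ∑' i, (M*(2*ξ)) * (2*ξ)^i := Summable.tsum_le_tsum hb habs hg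
    rw [tsum_mul_left, tsum_geometric_of_lt_one h2ξ h2ξ1] at h3
    have hgeo : (1 - 2*ξ)⁻¹ ≤ 2 := by
      rw [inv_le_comm₀ (by linarith) (by norm_num)]
      linarith
    have : |d 0| ≤ M*(2*ξ) * (1-2*ξ)⁻¹ := by rw [hd0, abs_neg]; exact h3
    calc |d 0| ≤ M*(2*ξ) * (1-2*ξ)⁻¹ := this
      _ ≤ M*(2*ξ) * 2 := by
          apply mul_le_mul_of_nonneg_left hgeo (by positivity)
      _ = 4*M*ξ := by ring
  by_contra hne
  have hpos : 0 < |d 0| := abs_pos.mpr hne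
  set ξ := min (1/4 : ℝ) (|d 0|/(8*M)) with hξ
  have hξ0 : 0 < ξ := lt_min (by norm_num) (by positivity)
  have h1 := hsmall ξ hξ0 (min_le_left _ _)
  have h2 : ξ ≤ |d 0|/(8*M) := min_le_right _ _
  have : 4*M*ξ ≤ |d 0|/2 := by
    calc 4*M*ξ ≤ 4*M*(|d 0|/(8*M)) := by
          apply mul_le_mul_of_nonneg_left h2 (by positivity)
      _ = |d 0|/2 := by field_simp; ring
  linarith

lemma coeff_zero (d : ℕ → ℝ)
    (hd : ∀ ξ : ℝ, 0 < ξ → ξ < 1 → HasSum (fun j => d j * ξ^j) 0) : ∀ j, d j = 0 := by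
  intro j
  induction j generalizing d with
  | zero => exact coeff_base d hd
  | succ n ih =>
      refine ih (fun j => d (j+1)) ?_
      intro ξ hξ0 hξ1
      have h1 := hd ξ hξ0 hξ1
      have h0 : d 0 = 0 := coeff_base d hd
      have h2 : HasSum (fun j => d (j+1) * ξ^(j+1)) 0 := by
        rw [hasSum_nat_add_iff (f := fun j => d j * ξ^j) 1]
        simpa [h0] using h1
      have h3 := h2.mul_right ξ⁻¹
      rw [zero_mul] at h3
      refine h3.congr_fun fun j => ?_
      rw [pow_succ]
      field_simp

lemma coeff_unique (d e : ℕ → ℝ) (F : ℝ → ℝ)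
    (hd : ∀ ξ : ℝ, 0 < ξ → ξ < 1 → HasSum (fun j => d j * ξ^j) (F ξ))
    (he : ∀ ξ : ℝ, 0 < ξ → ξ < 1 → HasSum (fun j => e j * ξ^j) (F ξ)) : ∀ j, d j = e j := by
  have h := coeff_zero (fun j => d j - e j) ?_
  · intro j
    have := h j
    simpa [sub_eq_zero] using this
  · intro ξ hξ0 hξ1
    have := (hd ξ hξ0 hξ1).sub (he ξ hξ0 hξ1)
    rw [sub_self] at this
    refine this.congr_fun fun j => ?_
    ring

end AuxReal
section Meas
variable {μ : Measure ℝ} {h : ℝ}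

lemma ae_pos (h0 : H0 μ) : ∀ᵐ y ∂μ, 0 < y := by
  rw [ae_iff]
  have hs : {y : ℝ | ¬ 0 < y} = Set.Iic 0 := by ext y; simp [not_lt]
  rw [hs]
  exact h0.1

lemma integrable_min (h0 : H0 μ) : Integrable (fun y : ℝ => min (y^2) y) μ := by
  constructor
  · exact ((continuous_pow 2).min continuous_id).aestronglyMeasurable
  · rw [HasFiniteIntegral]
    calc ∫⁻ y, ‖min (y^2) y‖₊ ∂μ = ∫⁻ y, ENNReal.ofReal (min (y^2) y) ∂μ := by
          refine lintegral_congr_ae (((ae_pos h0).mono fun y hy => ?_))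
          have hmin : 0 ≤ min (y^2) y := le_min (by positivity) hy.le
          exact Real.enorm_eq_ofReal hmin
      _ < ⊤ := h0.2.1

lemma integrable_bound (h0 : H0 μ) {f : ℝ → ℝ} (hf : AEStronglyMeasurable f μ) (C : ℝ)
    (hb : ∀ y : ℝ, 0 < y → ‖f y‖ ≤ C * min (y^2) y) : Integrable f μ :=
  ((integrable_min h0).const_mul C).mono' hf ((ae_pos h0).mono fun y hy => hb y hy)

lemma cont_acoef (j : ℕ) : Continuous (acoef h j) := by
  have hrfl : acoef h j = fun y => Real.exp (-(y/h)) * (y/h)^j / (j.factorial : ℝ) +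
      (if j = 0 then y/h - 1 else if j = 1 then -(y/h) else 0) := rfl
  rw [hrfl]
  rcases eq_or_ne j 0 with rfl | hj0
  · simp only [if_pos rfl, if_true, eq_self_iff_true]
    exact (((Real.continuous_exp.comp (continuous_id.div_const h).neg).mul
      ((continuous_id.div_const h).pow 0)).div_const _).add
      ((continuous_id.div_const h).sub continuous_const)
  · rcases eq_or_ne j 1 with rfl | hj1
    · simp only [if_neg (by norm_num : ¬ (1:ℕ) = 0), if_pos rfl, if_true, eq_self_iff_true]
      exact (((Real.continuous_exp.comp (continuous_id.div_const h).neg).mul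
        ((continuous_id.div_const h).pow 1)).div_const _).add
        (continuous_id.div_const h).neg
    · simp only [if_neg hj0, if_neg hj1]
      fun_prop

lemma acoef_bound (hh : 0 < h) (j : ℕ) {y : ℝ} (hy : 0 < y) :
    ‖acoef h j y‖ ≤ min ((y/h)^2) (y/h) := by
  have hx : 0 ≤ y/h := by positivity
  rcases j with _ | _ | j
  · have he : acoef h 0 y = Real.exp (-(y/h)) - 1 + y/h := by
      simp [acoef]; ring
    rw [he, Real.norm_eq_abs, abs_of_nonneg (aux_e0 _)]
    exact aux_e0_le hx
  · have he : acoef h 1 y = -(y/h - y/h * Real.exp (-(y/h))) := by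
      simp [acoef]; ring
    rw [he, Real.norm_eq_abs, abs_neg, abs_of_nonneg (aux_e1_nonneg hx)]
    exact aux_e1_le hx
  · have he : acoef h (j+2) y = Real.exp (-(y/h)) * (y/h)^(j+2) / ((j+2).factorial : ℝ) := by
      simp [acoef]
    rw [he, Real.norm_eq_abs, abs_of_nonneg (by positivity)]
    exact aux_ej_le hx (by omega)

lemma min_scale (hh : 0 < h) {y : ℝ} (hy : 0 ≤ y) :
    min ((y/h)^2) (y/h) ≤ (max (1/h^2) (1/h)) * min (y^2) y := by
  rcases min_cases (y^2) y with ⟨heq, _⟩ | ⟨heq, _⟩ <;> rw [heq]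
  · calc min ((y/h)^2) (y/h) ≤ (y/h)^2 := min_le_left _ _
      _ = (1/h^2) * y^2 := by ring
      _ ≤ max (1/h^2) (1/h) * y^2 :=
          mul_le_mul_of_nonneg_right (le_max_left _ _) (sq_nonneg y)
  · calc min ((y/h)^2) (y/h) ≤ y/h := min_le_right _ _
      _ = (1/h) * y := by ring
      _ ≤ max (1/h^2) (1/h) * y := mul_le_mul_of_nonneg_right (le_max_right _ _) hy

lemma int_acoef (h0 : H0 μ) (hh : 0 < h) (j : ℕ) : Integrable (acoef h j) μ :=
  integrable_bound h0 (cont_acoef j).aestronglyMeasurable _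
    (fun y hy => (acoef_bound hh j hy).trans (min_scale hh hy.le))

lemma int_norm_acoef_le (h0 : H0 μ) (hh : 0 < h) (j : ℕ) :
    ∫ y, ‖acoef h j y‖ ∂μ ≤ (max (1/h^2) (1/h)) * ∫ y, min (y^2) y ∂μ := by
  rw [← integral_const_mul]
  refine integral_mono_ae (int_acoef h0 hh j).norm ((integrable_min h0).const_mul _)
    ((ae_pos h0).mono fun y hy => ?_)
  exact (acoef_bound hh j hy).trans (min_scale hh hy.le)

lemma psi_integrand_integrable (h0 : H0 μ) {s : ℝ} (hs : 0 ≤ s) :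
    Integrable (fun y => Real.exp (-(s*y)) - 1 + s*y) μ := by
  have hmeas : AEStronglyMeasurable (fun y => Real.exp (-(s*y)) - 1 + s*y) μ :=
    (((Real.continuous_exp.comp (continuous_const.mul continuous_id).neg).sub
      continuous_const).add (continuous_const.mul continuous_id)).aestronglyMeasurable
  refine integrable_bound h0 hmeas (max (s^2) s) (fun y hy => ?_)
  rw [Real.norm_eq_abs, abs_of_nonneg (aux_e0 (s*y))]
  refine (aux_e0_le (x := s*y) (by positivity)).trans ?_
  rcases min_cases (y^2) y with ⟨heq, _⟩ | ⟨heq, _⟩ <;> rw [heq]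
  · calc min ((s*y)^2) (s*y) ≤ (s*y)^2 := min_le_left _ _
      _ = s^2 * y^2 := by ring
      _ ≤ max (s^2) s * y^2 := mul_le_mul_of_nonneg_right (le_max_left _ _) (sq_nonneg _)
  · calc min ((s*y)^2) (s*y) ≤ s*y := min_le_right _ _
      _ ≤ max (s^2) s * y := mul_le_mul_of_nonneg_right (le_max_right _ _) hy.le

lemma psi_nonneg (h0 : H0 μ) (s : ℝ) : 0 ≤ psiH μ s :=
  integral_nonneg_of_ae ((ae_pos h0).mono fun y _ => aux_e0 _)

lemma psi_mono (h0 : H0 μ) {s t : ℝ} (hs : 0 ≤ s) (hst : s ≤ t) : psiH μ s ≤ psiH μ t :=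
  integral_mono_ae (psi_integrand_integrable h0 hs) (psi_integrand_integrable h0 (hs.trans hst))
    ((ae_pos h0).mono fun y hy => aux_mono hy.le hs hst)

lemma mu_Ioo_pos (h0 : H0 μ) : 0 < μ (Set.Ioo 0 1) := by
  rcases eq_or_lt_of_le (zero_le : 0 ≤ μ (Set.Ioo 0 1)) with heq | hlt
  · exfalso
    have hres : μ.restrict (Set.Ioo (0:ℝ) 1) = 0 := Measure.restrict_eq_zero.mpr heq.symm
    have := h0.2.2
    rw [hres, lintegral_zero_measure] at this
    exact ENNReal.top_ne_zero this.symm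
  · exact hlt

lemma psi_pos (h0 : H0 μ) {s : ℝ} (hs : 0 < s) : 0 < psiH μ s := by
  rw [psiH, integral_pos_iff_support_of_nonneg_ae
    ((ae_pos h0).mono fun y _ => aux_e0 _) (psi_integrand_integrable h0 hs.le)]
  have hsub : Set.Ioo (0:ℝ) 1 ⊆ Function.support (fun y => Real.exp (-(s*y)) - 1 + s*y) := by
    intro y hy
    have hsy : 0 < s*y := mul_pos hs hy.1
    have hne : -(s*y) ≠ 0 := by linarith
    have hlt := Real.add_one_lt_exp hne
    simp only [Function.mem_support]
    intro hzero
    nlinarith [hlt]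
  exact (mu_Ioo_pos h0).trans_le (measure_mono hsub)

end Meas
section Coef
variable {μ : Measure ℝ} {h : ℝ}

lemma hasSum_A (h0 : H0 μ) (hh : 0 < h) {ξ : ℝ} (hξ : |ξ| < 1) :
    HasSum (fun j : ℕ => (∫ y, acoef h j y ∂μ) * ξ^j) (psiH μ ((1-ξ)/h)) := by
  have hint : ∀ j : ℕ, Integrable (fun y => acoef h j y * ξ^j) μ :=
    fun j => (int_acoef h0 hh j).mul_const _
  have hsum : Summable (fun j : ℕ => ∫ y, ‖acoef h j y * ξ^j‖ ∂μ) := by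
    set C0 := (max (1/h^2) (1/h)) * ∫ y, min (y^2) y ∂μ with hC0
    refine Summable.of_nonneg_of_le (fun j => integral_nonneg fun y => norm_nonneg _)
      (fun j => ?_) ((summable_geometric_of_lt_one (abs_nonneg ξ) hξ).mul_left C0)
    have heq : (fun y => ‖acoef h j y * ξ^j‖) = fun y => ‖acoef h j y‖ * |ξ|^j := by
      funext y
      rw [norm_mul, norm_pow, Real.norm_eq_abs, Real.norm_eq_abs]
    rw [heq, integral_mul_const]
    exact mul_le_mul_of_nonneg_right (int_norm_acoef_le h0 hh j) (by positivity)
  have hmain := hasSum_integral_of_summable_integral_norm hint hsum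
  have hval : ∫ y, (∑' j, acoef h j y * ξ^j) ∂μ = psiH μ ((1-ξ)/h) := by
    rw [psiH]
    refine integral_congr_ae (Filter.Eventually.of_forall fun y => ?_)
    exact (hasSum_acoef h y ξ).tsum_eq
  rw [hval] at hmain
  exact hmain.congr_fun fun j => (integral_mul_const _ _).symm

lemma hasSum_acoef_one (hy : (0:ℝ) ≤ 1) (h : ℝ) (y : ℝ) :
    HasSum (fun j : ℕ => acoef h j y) 0 := by
  have h1 := hasSum_acoef h y 1
  have hv : Real.exp (-((1-1)/h * y)) - 1 + (1-1)/h * y = 0 := by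
    norm_num
  rw [hv] at h1
  exact h1.congr_fun fun j => by rw [one_pow, mul_one]

lemma summable_int_norm_acoef (h0 : H0 μ) (hh : 0 < h) :
    Summable (fun j : ℕ => ∫ y, ‖acoef h j y‖ ∂μ) := by
  rw [← summable_nat_add_iff 2]
  set ℓ : ℕ → ENNReal := fun j => ∫⁻ y, (‖acoef h (j+2) y‖₊ : ENNReal) ∂μ with hℓ
  have hK : (0:ℝ) ≤ max (1/h^2) (1/h) := le_trans (by positivity) (le_max_right _ _)
  have hbound : ∀ᵐ y ∂μ, (∑' j : ℕ, (‖acoef h (j+2) y‖₊ : ENNReal))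
      ≤ ENNReal.ofReal ((max (1/h^2) (1/h)) * min (y^2) y) := by
    refine (ae_pos h0).mono fun y hy => ?_
    set x := y / h with hx
    have hx0 : 0 ≤ x := by positivity
    have hnn : ∀ j : ℕ, 0 ≤ acoef h (j+2) y := by
      intro j
      have : acoef h (j+2) y = Real.exp (-x) * x^(j+2) / ((j+2).factorial : ℝ) := by
        simp [acoef, ← hx]
      rw [this]
      positivity
    have hsumy := hasSum_acoef_one zero_le_one h y
    have hs2 : Summable (fun j : ℕ => acoef h (j+2) y) :=
      (summable_nat_add_iff (f := fun j : ℕ => acoef h j y) 2).mpr hsumy.summable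
    have htail : ∑' j : ℕ, acoef h (j+2) y = -(acoef h 0 y + acoef h 1 y) := by
      have := Summable.sum_add_tsum_nat_add 2 hsumy.summable
      rw [hsumy.tsum_eq] at this
      have h2 : ∑ i ∈ Finset.range 2, acoef h i y = acoef h 0 y + acoef h 1 y := by
        simp [Finset.sum_range_succ]
      linarith [this, h2]
    have hcoe : ∀ j : ℕ, (‖acoef h (j+2) y‖₊ : ENNReal) = ENNReal.ofReal (acoef h (j+2) y) := by
      intro j
      rw [← Real.enorm_eq_ofReal (hnn j)]
      rfl
    calc (∑' j : ℕ, (‖acoef h (j+2) y‖₊ : ENNReal))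
        = ∑' j : ℕ, ENNReal.ofReal (acoef h (j+2) y) := by
          exact tsum_congr hcoe
      _ = ENNReal.ofReal (∑' j : ℕ, acoef h (j+2) y) :=
          (ENNReal.ofReal_tsum_of_nonneg hnn hs2).symm
      _ ≤ ENNReal.ofReal ((max (1/h^2) (1/h)) * min (y^2) y) := by
          apply ENNReal.ofReal_le_ofReal
          rw [htail]
          have ha0 : acoef h 0 y = Real.exp (-x) - 1 + x := by simp [acoef, ← hx]; ring
          have ha1 : acoef h 1 y = x * Real.exp (-x) - x := by simp [acoef, ← hx]; ring
          have h1 : -(acoef h 0 y + acoef h 1 y) ≤ x - x * Real.exp (-x) := by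
            rw [ha0, ha1]
            have := aux_e0 x
            linarith
          refine h1.trans ((aux_e1_le hx0).trans (min_scale hh hy.le))
  have hfin : ∑' j, ℓ j ≠ ⊤ := by
    have hmeas : ∀ j : ℕ, AEMeasurable (fun y => (‖acoef h (j+2) y‖₊ : ENNReal)) μ :=
      fun j => ((cont_acoef (j+2)).measurable.nnnorm.coe_nnreal_ennreal).aemeasurable
    rw [hℓ, ← lintegral_tsum hmeas]
    have hle : ∫⁻ y, (∑' j : ℕ, (‖acoef h (j+2) y‖₊ : ENNReal)) ∂μ
        ≤ ∫⁻ y, ENNReal.ofReal ((max (1/h^2) (1/h)) * min (y^2) y) ∂μ :=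
      lintegral_mono_ae hbound
    have hfin2 : ∫⁻ y, ENNReal.ofReal ((max (1/h^2) (1/h)) * min (y^2) y) ∂μ < ⊤ := by
      have heq : ∀ y : ℝ, ENNReal.ofReal ((max (1/h^2) (1/h)) * min (y^2) y)
          = ENNReal.ofReal (max (1/h^2) (1/h)) * ENNReal.ofReal (min (y^2) y) := by
        intro y
        rw [ENNReal.ofReal_mul hK]
      simp_rw [heq]
      rw [lintegral_const_mul' _ _ ENNReal.ofReal_ne_top]
      exact ENNReal.mul_lt_top ENNReal.ofReal_lt_top h0.2.1
    exact ((hle.trans_lt hfin2)).ne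
  have hsummable := ENNReal.summable_toReal hfin
  refine hsummable.congr fun j => ?_
  rw [hℓ]
  exact (integral_norm_eq_lintegral_enorm ((cont_acoef (j+2)).aestronglyMeasurable)).symm

lemma hasSum_A_zero (h0 : H0 μ) (hh : 0 < h) :
    HasSum (fun j : ℕ => ∫ y, acoef h j y ∂μ) 0 := by
  have hmain := hasSum_integral_of_summable_integral_norm (fun j => int_acoef h0 hh j)
    (summable_int_norm_acoef h0 hh)
  have hval : ∫ y, (∑' j, acoef h j y) ∂μ = 0 := by
    have : ∀ y : ℝ, (∑' j, acoef h j y) = 0 := fun y => (hasSum_acoef_one zero_le_one h y).tsum_eq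
    simp_rw [this]
    exact integral_zero _ _
  rw [hval] at hmain
  exact hmain

end Coef
lemma sum_Icc_eq_range (G : ℤ → ℝ) (N : ℕ) :
    ∑ k ∈ Finset.Icc (0:ℤ) (N:ℤ), G k = ∑ j ∈ Finset.range (N+1), G (j:ℤ) := by
  refine Finset.sum_nbij' (i := fun k => k.toNat) (j := fun j => (j : ℤ)) ?_ ?_ ?_ ?_ ?_
  · intro k hk
    rw [Finset.mem_Icc] at hk
    rw [Finset.mem_range]
    omega
  · intro j hj
    rw [Finset.mem_range] at hj
    rw [Finset.mem_Icc]
    omega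
  · intro k hk
    rw [Finset.mem_Icc] at hk
    omega
  · intro j _
    omega
  · intro k hk
    rw [Finset.mem_Icc] at hk
    congr 1
    omega

section Phi
variable {μ : Measure ℝ} {h : ℝ}

lemma A0_eq (hh : 0 < h) : ∫ y, acoef h 0 y ∂μ = psiH μ (1/h) := by
  rw [psiH]
  refine integral_congr_ae (Filter.Eventually.of_forall fun y => ?_)
  have hxy : y / h = 1/h * y := by ring
  show Real.exp (-(y/h)) * (y/h)^0 / ((Nat.factorial 0 : ℕ) : ℝ) + (y/h - 1)
      = Real.exp (-(1/h * y)) - 1 + 1/h * y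
  rw [hxy]
  norm_num
  ring

lemma phi_eq (hh : 0 < h) (G : ℤ → ℝ)
    (hG : ∀ ξ : ℝ, |ξ| < 1 → HasSum (fun j : ℕ => G (j:ℤ) * ξ^j) (psiH μ ((1-ξ)/h)))
    {θ : ℝ} (hθ : 0 < θ) :
    phiExp G h θ = Real.exp (h*θ) * psiH μ ((1 - Real.exp (-(h*θ)))/h) := by
  set ξ := Real.exp (-(h*θ)) with hξdef
  have hξ0 : 0 < ξ := Real.exp_pos _
  have hξ1 : ξ < 1 := by
    rw [hξdef, Real.exp_lt_one_iff]
    nlinarith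
  have hsum := (hG ξ (abs_lt.mpr ⟨by linarith, hξ1⟩)).mul_left (Real.exp (h*θ))
  rw [phiExp, ← hsum.tsum_eq]
  refine tsum_congr fun j => ?_
  have hpow : ξ^j = Real.exp ((j:ℝ) * (-(h*θ))) := by
    rw [Real.exp_nat_mul]
  rw [hpow, show Real.exp (h*θ) * (G (j:ℤ) * Real.exp ((j:ℝ) * -(h*θ)))
      = G (j:ℤ) * (Real.exp (h*θ) * Real.exp ((j:ℝ) * -(h*θ))) from by ring,
    ← Real.exp_add]
  congr 1
  push_cast
  ring

lemma theta_tendsto (h0 : H0 μ) (hh : 0 < h) (G : ℤ → ℝ)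
    (hG : ∀ ξ : ℝ, |ξ| < 1 → HasSum (fun j : ℕ => G (j:ℤ) * ξ^j) (psiH μ ((1-ξ)/h)))
    (θfun : ℝ → ℝ) (hθ : ∀ β : ℝ, 0 < β → 0 ≤ θfun β ∧ phiExp G h (θfun β) = β) :
    Filter.Tendsto θfun (nhdsWithin 0 (Set.Ioi 0)) (nhds 0) := by
  rw [Metric.tendsto_nhds]
  intro ε hε
  have hsε : 0 < (1 - Real.exp (-(h*ε)))/h := by
    have h1 : Real.exp (-(h*ε)) < 1 := by
      rw [Real.exp_lt_one_iff]
      nlinarith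
    exact div_pos (by linarith) hh
  have hδ : 0 < psiH μ ((1 - Real.exp (-(h*ε)))/h) := psi_pos h0 hsε
  set δ := psiH μ ((1 - Real.exp (-(h*ε)))/h) with hδdef
  filter_upwards [Ioo_mem_nhdsGT_of_mem ⟨le_refl (0:ℝ), hδ⟩] with β hβ
  obtain ⟨hθ0, hφ⟩ := hθ β hβ.1
  rw [Real.dist_eq, sub_zero, abs_of_nonneg hθ0]
  by_contra hge
  push_neg at hge
  have hθpos : 0 < θfun β := lt_of_lt_of_le hε hge
  have hφβ := phi_eq hh G hG hθpos
  rw [hφ] at hφβ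
  have hmono : δ ≤ psiH μ ((1 - Real.exp (-(h*θfun β)))/h) := by
    refine psi_mono h0 hsε.le ?_
    have hee : Real.exp (-(h*θfun β)) ≤ Real.exp (-(h*ε)) := by
      apply Real.exp_le_exp.mpr
      nlinarith
    gcongr
  have hexp1 : (1:ℝ) ≤ Real.exp (h * θfun β) := by
    rw [Real.one_le_exp_iff]
    positivity
  have hψnn : 0 ≤ psiH μ ((1 - Real.exp (-(h*θfun β)))/h) := psi_nonneg h0 _
  nlinarith [hβ.2]

end Phi

/-- Corollary 3.24 / `cor:lambdaRlambda*`. Under (H0) and for `h > 0`,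
with the Grünwald coefficients `G_k = G_{k,h}` (`G_k = 0` for `k < 0`) and
`θfun β = φ_h^{−1}(β)`, one has componentwise as `β ↓ 0`:
`(β/G_0) y_n(β) → z_n`, where `z_n = 0` for `n ≤ 0` and
`z_n = −(1/G_0) Σ_{k=0}^n G_k` for `n > 0`; moreover `0 ≤ z_n ≤ 1` for `n > 0`. -/
theorem resolvent_vector_limit (μ : Measure ℝ) (h0 : H0 μ) (h : ℝ) (hh : 0 < h)
    (G : ℤ → ℝ) (hGneg : ∀ k : ℤ, k < 0 → G k = 0)
    (hG : ∀ ξ : ℝ, |ξ| < 1 →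
      HasSum (fun j : ℕ => G (j : ℤ) * ξ ^ j) (psiH μ ((1 - ξ) / h)))
    (θfun : ℝ → ℝ) (hθ : ∀ β : ℝ, 0 < β → 0 ≤ θfun β ∧ phiExp G h (θfun β) = β) :
    (∀ n : ℤ, Tendsto (fun β : ℝ => β / G 0 * resVec G h (θfun β) β n) (𝓝[>] 0)
      (𝓝 (if n ≤ 0 then 0 else -(1 / G 0) * ∑ k ∈ Finset.Icc (0:ℤ) n, G k))) ∧
    (∀ n : ℤ, 0 < n →
      0 ≤ -(1 / G 0) * ∑ k ∈ Finset.Icc (0:ℤ) n, G k ∧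
      -(1 / G 0) * ∑ k ∈ Finset.Icc (0:ℤ) n, G k ≤ 1) := by
  classical
  have hGA : ∀ j : ℕ, G (j:ℤ) = ∫ y, acoef h j y ∂μ :=
    coeff_unique _ _ (fun ξ => psiH μ ((1-ξ)/h))
      (fun ξ h1 h2 => hG ξ (abs_lt.mpr ⟨by linarith, h2⟩))
      (fun ξ h1 h2 => hasSum_A h0 hh (abs_lt.mpr ⟨by linarith, h2⟩))
  have hG0 : G 0 = ∫ y, acoef h 0 y ∂μ := by exact_mod_cast hGA 0
  have hG1 : G 1 = ∫ y, acoef h 1 y ∂μ := by exact_mod_cast hGA 1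
  have hG0pos : 0 < G 0 := by
    rw [hG0, A0_eq hh]
    exact psi_pos h0 (by positivity)
  have hGsum : HasSum (fun j : ℕ => G (j:ℤ)) 0 := (hasSum_A_zero h0 hh).congr_fun hGA
  have hGnn : ∀ j : ℕ, 2 ≤ j → 0 ≤ G (j:ℤ) := by
    intro j hj
    rw [hGA j]
    refine integral_nonneg_of_ae ((ae_pos h0).mono fun y hy => ?_)
    obtain ⟨m, rfl⟩ : ∃ m, j = m + 2 := ⟨j - 2, by omega⟩
    have ha : acoef h (m+2) y = Real.exp (-(y/h)) * (y/h)^(m+2) / ((m+2).factorial : ℝ) := by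
      simp [acoef]
    rw [ha]
    have hx : 0 ≤ y/h := by positivity
    positivity
  have h2G : 0 ≤ 2 * G 0 + G 1 := by
    rw [hG0, hG1, ← integral_const_mul,
      ← integral_add ((int_acoef h0 hh 0).const_mul 2) (int_acoef h0 hh 1)]
    refine integral_nonneg_of_ae ((ae_pos h0).mono fun y hy => ?_)
    have hx : 0 ≤ y/h := by positivity
    have hkey := aux_2a0a1 hx
    have ha0 : acoef h 0 y = Real.exp (-(y/h)) - 1 + y/h := by simp [acoef]; ring
    have ha1 : acoef h 1 y = (y/h) * Real.exp (-(y/h)) - y/h := by simp [acoef]; ring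
    simp only [Pi.add_apply, Pi.zero_apply]
    rw [ha0, ha1]
    linarith
  have hGabs : Summable (fun j : ℕ => |G (j:ℤ)|) := by
    refine Summable.of_nonneg_of_le (fun j => abs_nonneg _) (fun j => ?_)
      (summable_int_norm_acoef h0 hh)
    rw [hGA j]
    calc |∫ y, acoef h j y ∂μ| = ‖∫ y, acoef h j y ∂μ‖ := (Real.norm_eq_abs _).symm
      _ ≤ ∫ y, ‖acoef h j y‖ ∂μ := norm_integral_le_integral_norm _
  have htail : ∀ N : ℕ, HasSum (fun m : ℕ => G ((N:ℤ) + (m:ℤ) + 1))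
      (- ∑ j ∈ Finset.range (N+1), G (j:ℤ)) := by
    intro N
    have h1 : HasSum (fun m : ℕ => G (((m + (N+1) : ℕ)):ℤ))
        (- ∑ j ∈ Finset.range (N+1), G (j:ℤ)) := by
      rw [hasSum_nat_add_iff (f := fun j : ℕ => G (j:ℤ)) (N+1), neg_add_cancel]
      exact hGsum
    refine h1.congr_fun fun m => ?_
    congr 1
    push_cast
    ring
  have hbounds : ∀ N : ℕ, 1 ≤ N →
      0 ≤ -(1/G 0) * ∑ j ∈ Finset.range (N+1), G (j:ℤ) ∧
      -(1/G 0) * ∑ j ∈ Finset.range (N+1), G (j:ℤ) ≤ 1 := by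
    intro N hN
    set S := ∑ j ∈ Finset.range (N+1), G (j:ℤ) with hS
    have htN := htail N
    have hnnterm : ∀ m : ℕ, 0 ≤ G ((N:ℤ) + m + 1) := by
      intro m
      have harg : ((N:ℤ) + m + 1) = ((N + m + 1 : ℕ) : ℤ) := by push_cast; ring
      rw [harg]
      exact hGnn _ (by omega)
    have hnegS : 0 ≤ -S := by
      rw [← htN.tsum_eq]
      exact tsum_nonneg hnnterm
    constructor
    · rw [show -(1/G 0) * S = (1/G 0) * (-S) by ring]
      exact mul_nonneg (by positivity) hnegS
    · have ht1 := htail 1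
      have hval1 : (- ∑ j ∈ Finset.range (1+1), G (j:ℤ)) = -(G 0 + G 1) := by
        simp [Finset.sum_range_succ]
      rw [hval1] at ht1
      push_cast at ht1
      obtain ⟨K, rfl⟩ : ∃ K, N = K + 1 := ⟨N - 1, by omega⟩
      have hsplit := Summable.sum_add_tsum_nat_add (f := fun m : ℕ => G ((1:ℤ) + m + 1)) K ht1.summable
      rw [ht1.tsum_eq] at hsplit
      have htsum_eq : ∑' m : ℕ, G ((1:ℤ) + ((m + K : ℕ) : ℤ) + 1) = -S := by
        rw [← htN.tsum_eq]
        refine tsum_congr fun m => ?_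
        congr 1
        push_cast
        ring
      have hfin_nonneg : 0 ≤ ∑ i ∈ Finset.range K, G ((1:ℤ) + i + 1) := by
        refine Finset.sum_nonneg fun i _ => ?_
        have harg : (1:ℤ) + i + 1 = ((i + 2 : ℕ):ℤ) := by push_cast; ring
        rw [harg]
        exact hGnn _ (by omega)
      have h5 : -S ≤ -(G 0 + G 1) := by
        rw [← htsum_eq]
        push_cast at hsplit ⊢
        linarith
      have h6 : -S ≤ G 0 := by linarith
      rw [show -(1/G 0) * S = (-S) / G 0 by ring, div_le_one hG0pos]
      exact h6
  refine ⟨?_, ?_⟩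
  · intro n
    by_cases hn : n ≤ 0
    · rw [if_pos hn]
      have hub : Tendsto (fun β : ℝ => β / G 0) (𝓝[>] (0:ℝ)) (𝓝 0) := by
        have := ((continuous_id.div_const (G 0)).tendsto 0).mono_left
          (nhdsWithin_le_nhds (s := Set.Ioi (0:ℝ)))
        simpa using this
      refine tendsto_of_tendsto_of_tendsto_of_le_of_le' tendsto_const_nhds hub ?_ ?_
      · filter_upwards [self_mem_nhdsWithin] with β hβ
        have hβ0 : (0:ℝ) < β := hβ
        obtain ⟨hθ0, _⟩ := hθ β hβ0
        simp only [resVec, if_pos hn]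
        exact mul_nonneg (div_nonneg hβ0.le hG0pos.le) (Real.exp_pos _).le
      · filter_upwards [self_mem_nhdsWithin] with β hβ
        have hβ0 : (0:ℝ) < β := hβ
        obtain ⟨hθ0, _⟩ := hθ β hβ0
        simp only [resVec, if_pos hn]
        have hn1 : (n:ℝ) - 1 ≤ 0 := by
          have : (n:ℝ) ≤ 0 := by exact_mod_cast hn
          linarith
        have hexp : Real.exp (h * ((n:ℝ) - 1) * θfun β) ≤ 1 := by
          rw [Real.exp_le_one_iff]
          exact mul_nonpos_of_nonpos_of_nonneg
            (mul_nonpos_of_nonneg_of_nonpos hh.le hn1) hθ0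
        calc β / G 0 * Real.exp (h * ((n:ℝ) - 1) * θfun β)
            ≤ β / G 0 * 1 := by
              exact mul_le_mul_of_nonneg_left hexp (div_nonneg hβ0.le hG0pos.le)
          _ = β / G 0 := mul_one _
    · rw [if_neg hn]
      push_neg at hn
      obtain ⟨N, rfl⟩ : ∃ N : ℕ, n = (N:ℤ) := ⟨n.toNat, by omega⟩
      rw [sum_Icc_eq_range G N]
      set S := ∑ j ∈ Finset.range (N+1), G (j:ℤ) with hS
      have hTend : Tendsto
          (fun β : ℝ => ∑' m : ℕ, G ((N:ℤ) + m + 1) * Real.exp (h * (-1 - (m:ℝ)) * θfun β))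
          (𝓝[>] 0) (𝓝 (∑' m : ℕ, G ((N:ℤ) + m + 1))) := by
        have hbound : Summable (fun m : ℕ => |G ((N:ℤ) + m + 1)|) := by
          have hsh := (summable_nat_add_iff (f := fun j : ℕ => |G (j:ℤ)|) (N+1)).mpr hGabs
          refine hsh.congr fun m => ?_
          congr 2
          push_cast
          ring
        apply tendsto_tsum_of_dominated_convergence hbound
        · intro m
          have hc : Continuous (fun t : ℝ => G ((N:ℤ) + m + 1)
              * Real.exp (h * (-1 - (m:ℝ)) * t)) := by
            exact continuous_const.mul (Real.continuous_exp.comp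
              ((continuous_const.mul continuous_id)))
          have h1 := (hc.tendsto 0).comp (theta_tendsto h0 hh G hG θfun hθ)
          simpa [Function.comp_def] using h1
        · filter_upwards [self_mem_nhdsWithin] with β hβ
          obtain ⟨hθ0, _⟩ := hθ β hβ
          intro m
          rw [norm_mul, Real.norm_eq_abs, Real.norm_eq_abs]
          have hm : (-1 - (m:ℝ)) ≤ 0 := by
            have := Nat.cast_nonneg (α := ℝ) m
            linarith
          have hexp : Real.exp (h * (-1 - (m:ℝ)) * θfun β) ≤ 1 := by
            rw [Real.exp_le_one_iff]
            exact mul_nonpos_of_nonpos_of_nonneg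
              (mul_nonpos_of_nonneg_of_nonpos hh.le hm) hθ0
          rw [abs_of_pos (Real.exp_pos _)]
          calc |G ((N:ℤ) + m + 1)| * Real.exp (h * (-1 - (m:ℝ)) * θfun β)
              ≤ |G ((N:ℤ) + m + 1)| * 1 := mul_le_mul_of_nonneg_left hexp (abs_nonneg _)
            _ = |G ((N:ℤ) + m + 1)| := mul_one _
      rw [(htail N).tsum_eq] at hTend
      have hev : (fun β : ℝ => β / G 0 * resVec G h (θfun β) β (N:ℤ))
          =ᶠ[𝓝[>] (0:ℝ)] fun β => (1/G 0)
            * ∑' m : ℕ, G ((N:ℤ) + m + 1) * Real.exp (h * (-1 - (m:ℝ)) * θfun β) := by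
        filter_upwards [self_mem_nhdsWithin] with β hβ
        have hβ0 : (0:ℝ) < β := hβ
        have hβne : β ≠ 0 := ne_of_gt hβ0
        simp only [resVec, if_neg (not_le.mpr hn)]
        field_simp
        refine tsum_congr fun m => ?_
        congr 2
        ring
      have hfin := hTend.const_mul (1/G 0)
      rw [show -(1/G 0) * S = 1/G 0 * (-S) by ring]
      exact hfin.congr' hev.symm
  · intro n hn
    obtain ⟨N, rfl⟩ : ∃ N : ℕ, n = (N:ℤ) := ⟨n.toNat, by omega⟩
    rw [sum_Icc_eq_range G N]
    exact hbounds N (by exact_mod_cast hn)
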